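/- In the state category of the net N_n, if x·μ = y where x is a state beginning with 1 (ε₁ = 1) and y a state beginning with 0, then μ admits a decomposition μ = t_k t_{k-1} ⋯ t₂ μ′ in the trace monoid for some k ≥ 2, and necessarily x = 1⋯1 0 ε_{k+1}⋯ε_{n-1} (k−1 ones followed by a zero). -/

import Mathlib

/-! Concrete pipeline Petri nets. States of a net with `m` places are `Fin m → Bool`. -/

/-- The "tail" pipeline net `N` with `m` places `p₁,…,p_m` (0-indexed `0,…,m-1`) and `m`
events `t₂,…,t_{m+1}` (0-indexed: event `j` is `t_{j+2}` with `pre = {p_{j+1}}`, i.e. place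
`j`, and `post = {p_{j+2}}`, i.e. place `j+1`, when `j+1 < m`, and `post = ∅` for the last
event).  `stepT m s e` is the partial firing of event `e` at state `s`. -/
def stepT (m : ℕ) (s : Fin m → Bool) (e : Fin m) : Option (Fin m → Bool) :=
  if s e = true then
    if h : (e : ℕ) + 1 < m then
      if s ⟨(e : ℕ) + 1, h⟩ = false then
        some (Function.update (Function.update s e false) ⟨(e : ℕ) + 1, h⟩ true)
      else none
    else some (Function.update s e false)
  else none

/-- Firing a word (list) of events, `s · (a :: l) = (s · a) · l`. -/
def stepsT (m : ℕ) : (Fin m → Bool) → List (Fin m) → Option (Fin m → Bool)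
  | s, [] => some s
  | s, a :: l => (stepT m s a).bind fun s' => stepsT m s' l

/-- Resources (`pre ∪ post`, as a set of 0-indexed places) of event `e` of the tail net. -/
def resT (m : ℕ) (e : Fin m) : Set ℕ :=
  {x | x = (e : ℕ) ∨ (x = (e : ℕ) + 1 ∧ (e : ℕ) + 1 < m)}

/-- Independence of events of the tail net: disjoint resources. -/
def indepT (m : ℕ) (a b : Fin m) : Prop :=
  ∀ x, ¬(x ∈ resT m a ∧ x ∈ resT m b)

/-- One swap of adjacent independent letters in a word. -/
inductive TraceStep {E : Type} (r : E → E → Prop) : List E → List E → Prop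
  | swap (u v : List E) (a b : E) : r a b →
      TraceStep r (u ++ a :: b :: v) (u ++ b :: a :: v)

/-- Trace equivalence: two words represent the same element of the trace monoid `M(E,I)`
iff they are related by the equivalence closure of adjacent swaps of independent letters. -/
def TraceEquiv {E : Type} (r : E → E → Prop) : List E → List E → Prop :=
  Relation.EqvGen (TraceStep r)

/-- The word `t_k t_{k-1} ⋯ t₂` of the net `N_n`, as the list of 0-indexed events
`[k-2, k-3, …, 0]` (event `i` is `t_{i+2}`). -/
def descList (m k : ℕ) : List (Fin m) :=
  (List.range (k - 1)).reverse.filterMap fun i =>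
    if h : i < m then some ⟨i, h⟩ else none

lemma stepT_some {m : ℕ} {s s' : Fin m → Bool} {e : Fin m} (h : stepT m s e = some s') :
    s e = true ∧ (∀ h1 : (e:ℕ)+1 < m, s ⟨(e:ℕ)+1, h1⟩ = false) ∧
    s' e = false ∧ (∀ h1 : (e:ℕ)+1 < m, s' ⟨(e:ℕ)+1, h1⟩ = true) ∧
    (∀ j : Fin m, (j:ℕ) ≠ e → (j:ℕ) ≠ (e:ℕ)+1 → s' j = s j) := by
  unfold stepT at h
  split_ifs at h with h1 h2 h3
  · -- e+1 < m, s(e+1) = false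
    rw [Option.some_inj] at h; subst h
    refine ⟨h1, fun _ => h3, ?_, ?_, ?_⟩
    · rw [Function.update_of_ne (by intro hc; have := congrArg Fin.val hc; simp at this),
        Function.update_self]
    · intro _; rw [Function.update_self]
    · intro j hj hj1
      rw [Function.update_of_ne (by intro hc; exact hj1 (congrArg Fin.val hc)),
        Function.update_of_ne (by intro hc; exact hj (congrArg Fin.val hc))]
  · rw [Option.some_inj] at h; subst h
    refine ⟨h1, fun hc => absurd hc h2, ?_, fun hc => absurd hc h2, ?_⟩
    · rw [Function.update_self]
    · intro j hj _
      rw [Function.update_of_ne (by intro hc; exact hj (congrArg Fin.val hc))]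

-- independence from index gap
lemma indep_of_gap {m : ℕ} {a b : Fin m} (h : (a:ℕ)+2 ≤ b ∨ (b:ℕ)+2 ≤ a) : indepT m a b := by
  intro x ⟨hx1, hx2⟩
  simp only [resT, Set.mem_setOf_eq] at hx1 hx2
  rcases hx1 with h1 | ⟨h1, -⟩ <;> rcases hx2 with h2 | ⟨h2, -⟩ <;> omega
lemma indepT_symm {m : ℕ} {a b : Fin m} (h : indepT m a b) : indepT m b a :=
  fun x ⟨h1, h2⟩ => h x ⟨h2, h1⟩
lemma indep_ne {m : ℕ} {a b : Fin m} (h : indepT m a b) :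
    (a:ℕ) ≠ b ∧ (a:ℕ) ≠ (b:ℕ)+1 ∧ (b:ℕ) ≠ (a:ℕ)+1 := by
  refine ⟨fun hc => h a ⟨Or.inl rfl, Or.inl hc⟩,
    fun hc => h a ⟨Or.inl rfl, Or.inr ⟨hc, hc ▸ a.isLt⟩⟩,
    fun hc => h b ⟨Or.inr ⟨hc, hc ▸ b.isLt⟩, Or.inl rfl⟩⟩
lemma stepT_isSome {m : ℕ} {s : Fin m → Bool} {e : Fin m} (h1 : s e = true)
    (h2 : ∀ h : (e:ℕ)+1 < m, s ⟨(e:ℕ)+1, h⟩ = false) : ∃ t, stepT m s e = some t := by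
  unfold stepT
  rw [if_pos h1]
  split_ifs with hb hc
  · exact ⟨_, rfl⟩
  · exact absurd (h2 hb) (by simp [hc])
  · exact ⟨_, rfl⟩
lemma stepT_swap {m : ℕ} {a b : Fin m} (hab : indepT m a b) {s t u : Fin m → Bool}
    (h1 : stepT m s b = some t) (h2 : stepT m t a = some u) :
    ∃ t', stepT m s a = some t' ∧ stepT m t' b = some u := by
  obtain ⟨nab, nab1, nba1⟩ := indep_ne hab
  obtain ⟨hsb, hsb1, htb, htb1, hts⟩ := stepT_some h1
  obtain ⟨hta, hta1, hua, hua1, hut⟩ := stepT_some h2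
  have hsa : s a = true := by rw [← hts a nab nab1]; exact hta
  have hsa1 : ∀ h : (a:ℕ)+1 < m, s ⟨(a:ℕ)+1, h⟩ = false := by
    intro h
    rw [← hts ⟨(a:ℕ)+1, h⟩ (by simpa using fun hc => nba1 hc.symm) (by simpa using fun hc => nab (by omega))]
    exact hta1 h
  obtain ⟨t', ht'⟩ := stepT_isSome hsa hsa1
  obtain ⟨_, _, ht'a, ht'a1, ht's⟩ := stepT_some ht'
  have ht'b : t' b = true := by
    rw [ht's b (fun hc => nab hc.symm) (fun hc => nba1 hc)]; exact hsb
  have ht'b1 : ∀ h : (b:ℕ)+1 < m, t' ⟨(b:ℕ)+1, h⟩ = false := by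
    intro h
    rw [ht's ⟨(b:ℕ)+1, h⟩ (by simpa using fun hc => nab1 hc.symm) (by simpa using fun hc => nab (by omega))]
    exact hsb1 h
  obtain ⟨u', hu'⟩ := stepT_isSome ht'b ht'b1
  obtain ⟨_, _, hu'b, hu'b1, hu't'⟩ := stepT_some hu'
  refine ⟨t', ht', ?_⟩
  rw [hu']
  congr 1
  funext j
  by_cases hja : (j:ℕ) = (a:ℕ)
  · have : j = a := Fin.ext hja
    subst this
    rw [hu't' j (fun hc => nab hc) (fun hc => nab1 hc), ht'a, hua]
  · by_cases hja1 : (j:ℕ) = (a:ℕ)+1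
    · have hb : (a:ℕ)+1 < m := hja1 ▸ j.isLt
      have hj : j = ⟨(a:ℕ)+1, hb⟩ := Fin.ext hja1
      rw [hj, hu't' _ (by simpa using fun hc => nba1 hc.symm) (by simpa using fun hc => nab (by omega)),
        ht'a1 hb, hua1 hb]
    · by_cases hjb : (j:ℕ) = (b:ℕ)
      · have : j = b := Fin.ext hjb
        subst this
        rw [hu'b, hut j (fun hc => nab hc.symm) (fun hc => nba1 hc), htb]
      · by_cases hjb1 : (j:ℕ) = (b:ℕ)+1
        · have hb : (b:ℕ)+1 < m := hjb1 ▸ j.isLt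
          have hj : j = ⟨(b:ℕ)+1, hb⟩ := Fin.ext hjb1
          rw [hj, hu'b1 hb, hut _ (by simpa using fun hc => nab1 hc.symm) (by simpa using fun hc => nab (by omega)),
            htb1 hb]
        · rw [hu't' j hjb hjb1, ht's j hja hja1, hut j hja hja1, hts j hjb hjb1]
lemma steps_move {m : ℕ} {a : Fin m} :
    ∀ (pre : List (Fin m)) {suf : List (Fin m)} {s y : Fin m → Bool},
      (∀ b ∈ pre, indepT m a b) → stepsT m s (pre ++ a :: suf) = some y →
      stepsT m s (a :: (pre ++ suf)) = some y := by
  intro pre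
  induction pre with
  | nil => intro suf s y _ h; simpa using h
  | cons b pre ih =>
    intro suf s y hind h
    simp only [List.cons_append, stepsT, Option.bind_eq_some_iff] at h
    obtain ⟨t, hbt, hrest⟩ := h
    have h2 := ih (fun c hc => hind c (List.mem_cons_of_mem _ hc)) hrest
    simp only [stepsT, Option.bind_eq_some_iff] at h2
    obtain ⟨u, htu, hu⟩ := h2
    obtain ⟨t', hst', ht'u⟩ := stepT_swap (hind b (List.mem_cons_self)) hbt htu
    simp only [List.cons_append, stepsT, Option.bind_eq_some_iff]
    exact ⟨t', hst', ⟨u, ht'u, hu⟩⟩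
lemma traceEquiv_cons {E : Type} {r : E → E → Prop} {c : E} {l1 l2 : List E}
    (h : TraceEquiv r l1 l2) : TraceEquiv r (c :: l1) (c :: l2) := by
  induction h with
  | rel x y hxy =>
    cases hxy with
    | swap u v a b hr => exact Relation.EqvGen.rel _ _ (TraceStep.swap (c :: u) v a b hr)
  | refl => exact Relation.EqvGen.refl _
  | symm _ _ _ ih => exact Relation.EqvGen.symm _ _ ih
  | trans _ _ _ _ _ ih1 ih2 => exact Relation.EqvGen.trans _ _ _ ih1 ih2
lemma trace_move {m : ℕ} {a : Fin m} :
    ∀ (pre : List (Fin m)) (suf : List (Fin m)), (∀ b ∈ pre, indepT m a b) →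
      TraceEquiv (indepT m) (pre ++ a :: suf) (a :: (pre ++ suf)) := by
  intro pre
  induction pre with
  | nil => intro suf _; exact Relation.EqvGen.refl _
  | cons c pre ih =>
    intro suf hind
    have h1 : TraceEquiv (indepT m) (c :: (pre ++ a :: suf)) (c :: a :: (pre ++ suf)) :=
      traceEquiv_cons (ih suf (fun b hb => hind b (List.mem_cons_of_mem _ hb)))
    have h2 : TraceEquiv (indepT m) (c :: a :: (pre ++ suf)) (a :: c :: (pre ++ suf)) :=
      Relation.EqvGen.rel _ _
        (TraceStep.swap [] (pre ++ suf) c a (indepT_symm (hind c (List.mem_cons_self))))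
    exact Relation.EqvGen.trans _ _ _ h1 h2
lemma extract {m : ℕ} {j0 : ℕ} (hj : 1 ≤ j0) (hj0m : j0 ≤ m) :
    ∀ (l : List (Fin m)) (s y : Fin m → Bool),
      (∀ i : Fin m, (i:ℕ) < j0 → s i = true) →
      (∀ h : j0 < m, s ⟨j0, h⟩ = false) →
      stepsT m s l = some y → y ⟨0, by omega⟩ = false →
      ∃ (pre suf : List (Fin m)) (a : Fin m), (a:ℕ) = j0 - 1 ∧ l = pre ++ a :: suf ∧ ∀ b ∈ pre, j0 + 1 ≤ (b:ℕ) := by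
  intro l
  induction l with
  | nil =>
    intro s y hs1 _ hrun hy
    simp only [stepsT, Option.some_inj] at hrun
    subst hrun
    exact absurd (hs1 ⟨0, by omega⟩ hj) (by simp [hy])
  | cons e rest ih =>
    intro s y hs1 hs2 hrun hy
    simp only [stepsT, Option.bind_eq_some_iff] at hrun
    obtain ⟨t, het, hrest⟩ := hrun
    obtain ⟨hse, hse1, hte, hte1, hts⟩ := stepT_some het
    rcases lt_trichotomy ((e:ℕ)) (j0-1) with hlt | heq | hgt
    · -- e < j0 - 1 : impossible, s (e+1) = true
      have h1 : (e:ℕ)+1 < m := by omega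
      have := hse1 h1
      rw [hs1 ⟨(e:ℕ)+1, h1⟩ (by simpa using by omega)] at this
      exact absurd this (by simp)
    · -- e = j0 - 1
      exact ⟨[], rest, e, heq, by simp, by simp⟩
    · rcases eq_or_lt_of_le (show j0 ≤ (e:ℕ) by omega) with heq2 | hgt2
      · -- e = j0 : impossible, s e = false
        have hj0 : j0 < m := heq2 ▸ e.isLt
        have : e = (⟨j0, hj0⟩ : Fin m) := Fin.ext heq2.symm
        rw [this, hs2 hj0] at hse
        exact absurd hse (by simp)
      · -- e ≥ j0 + 1
        have ht1 : ∀ i : Fin m, (i:ℕ) < j0 → t i = true := by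
          intro i hi
          rw [hts i (by omega) (by omega)]
          exact hs1 i hi
        have ht2 : ∀ h : j0 < m, t ⟨j0, h⟩ = false := by
          intro h
          rw [hts ⟨j0, h⟩ (by simp; omega) (by simp; omega)]
          exact hs2 h
        obtain ⟨pre, suf, a, ha, hdec, hpre⟩ := ih t y ht1 ht2 hrest hy
        refine ⟨e :: pre, suf, a, ha, by rw [hdec]; simp, ?_⟩
        intro b hb
        rcases List.mem_cons.mp hb with rfl | hb
        · omega
        · exact hpre b hb
lemma descList_succ {m j0 : ℕ} (h1 : 1 ≤ j0) (h2 : j0 ≤ m) :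
    descList m (j0+1) = (⟨j0-1, by omega⟩ : Fin m) :: descList m j0 := by
  unfold descList
  have h3 : j0 + 1 - 1 = (j0-1) + 1 := by omega
  rw [h3, List.range_succ, List.reverse_append]
  simp only [List.reverse_singleton, List.singleton_append, List.filterMap_cons]
  rw [dif_pos (show j0-1 < m by omega)]
lemma main_lemma {m : ℕ} (hm : 1 ≤ m) :
    ∀ j0, 1 ≤ j0 → j0 ≤ m →
    ∀ (l : List (Fin m)) (s y : Fin m → Bool),
      (∀ i : Fin m, (i:ℕ) < j0 → s i = true) →
      (∀ h : j0 < m, s ⟨j0, h⟩ = false) →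
      stepsT m s l = some y → y ⟨0, by omega⟩ = false →
      ∃ l', TraceEquiv (indepT m) l (descList m (j0+1) ++ l') := by
  intro j0
  induction j0 with
  | zero => omega
  | succ j ih =>
    intro _ hj0m l s y hs1 hs2 hrun hy
    obtain ⟨pre, suf, a, ha, rfl, hpre⟩ := extract (by omega) hj0m l s y hs1 hs2 hrun hy
    have ha' : (a:ℕ) = j := by omega
    have hind : ∀ b ∈ pre, indepT m a b := fun b hb =>
      indep_of_gap (Or.inl (by have := hpre b hb; omega))
    have htr := trace_move pre suf hind
    have hsem := steps_move pre hind hrun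
    simp only [stepsT, Option.bind_eq_some_iff] at hsem
    obtain ⟨t, hta, hrest⟩ := hsem
    obtain ⟨_, _, htaf, hta1, hts⟩ := stepT_some hta
    have hdesc : descList m (j+1+1) = a :: descList m (j+1) := by
      rw [descList_succ (by omega) hj0m]
      congr 1
      exact (Fin.ext (show (a:ℕ) = j+1-1 by omega)).symm
    by_cases hj1 : j = 0
    · subst hj1
      refine ⟨pre ++ suf, ?_⟩
      rw [hdesc, show descList m 1 = [] from by simp [descList]]
      exact htr
    · have ht1 : ∀ i : Fin m, (i:ℕ) < j → t i = true := fun i hi => by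
        rw [hts i (by omega) (by omega)]
        exact hs1 i (by omega)
      have ht2 : ∀ h : j < m, t ⟨j, h⟩ = false := fun h => by
        rw [show (⟨j, h⟩ : Fin m) = a from Fin.ext (show j = (a:ℕ) by omega)]
        exact htaf
      obtain ⟨l'', htr2⟩ := ih (by omega) (by omega) (pre ++ suf) t y ht1 ht2 hrest hy
      refine ⟨l'', Relation.EqvGen.trans _ _ _ htr ?_⟩
      rw [hdesc]
      exact traceEquiv_cons htr2

/-- In the state category of `N_n` (with `m = n-1` places and events, event `i` being
`t_{i+2}`): if `x·μ = y` where `x` begins with `1` and `y` begins with `0`, then in the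
trace monoid `μ = t_k t_{k-1} ⋯ t₂ μ′` for some `2 ≤ k ≤ n`, and necessarily
`x = 1⋯1 0 ε_{k+1} ⋯ ε_{n-1}` (`k-1` ones followed by a zero). -/
theorem pipeline_trace_decomposition (n : ℕ) (hn : 2 ≤ n)
    (x y : Fin (n - 1) → Bool) (l : List (Fin (n - 1)))
    (hx : x ⟨0, by omega⟩ = true) (hy : y ⟨0, by omega⟩ = false)
    (h : stepsT (n - 1) x l = some y) :
    ∃ k, 2 ≤ k ∧ k ≤ n ∧
      (∃ l', TraceEquiv (indepT (n - 1)) l (descList (n - 1) k ++ l')) ∧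
      (∀ j : Fin (n - 1), (j : ℕ) < k - 1 → x j = true) ∧
      (∀ h' : k - 1 < n - 1, x ⟨k - 1, h'⟩ = false) := by
  classical
  have hm1 : 1 ≤ n - 1 := by omega
  have hP : ∃ j, ∀ hj : j < n - 1, x ⟨j, hj⟩ = false :=
    ⟨n - 1, fun hj => absurd hj (lt_irrefl _)⟩
  set j0 := Nat.find hP with hj0def
  have hPj0 : ∀ hj : j0 < n - 1, x ⟨j0, hj⟩ = false := Nat.find_spec hP
  have hmin : ∀ i, i < j0 → ¬ ∀ hj : i < n - 1, x ⟨i, hj⟩ = false :=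
    fun i hi => Nat.find_min hP hi
  have hj0m : j0 ≤ n - 1 := Nat.find_min' hP (fun hj => absurd hj (lt_irrefl _))
  have hs1 : ∀ i : Fin (n - 1), (i : ℕ) < j0 → x i = true := by
    intro i hi
    rcases Bool.eq_false_or_eq_true (x i) with ht | hf
    · exact ht
    · exact absurd (fun hj : (i:ℕ) < n - 1 => by
        rw [show (⟨(i:ℕ), hj⟩ : Fin (n-1)) = i from Fin.ext rfl]; exact hf) (hmin _ hi)
  have hj01 : 1 ≤ j0 := by
    by_contra hc
    have h0 : j0 = 0 := by omega
    have := hPj0 (by omega)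
    rw [show (⟨j0, by omega⟩ : Fin (n-1)) = ⟨0, by omega⟩ from Fin.ext (show j0 = 0 by omega)] at this
    rw [hx] at this
    exact absurd this (by simp)
  obtain ⟨l', htr⟩ := main_lemma hm1 j0 hj01 hj0m l x y hs1 hPj0 h hy
  refine ⟨j0 + 1, by omega, by omega, ⟨l', htr⟩, ?_, ?_⟩
  · intro j hj
    exact hs1 j (by omega)
  · intro h'
    exact hPj0 h'
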